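/- For z, w in the open unit disk and n ≥ 1, if F_n = (1/n) Σ_{k=0}^{n-1} δ_{2kπ/n} is the uniform atomic measure on n-th roots of unity angles, then ∫ s(z,t) conj(s(w,t)) F_n(dt) = (1/((1-z^n)(1-conj(w)^n))) · (1-(z·conj(w))^n)/(1-z·conj(w)). -/

import Mathlib

open Complex Real Finset

lemma sum_inv_one_sub_mul_root (n : ℕ) (hn : 1 ≤ n) (ρ z : ℂ)
    (hρ : IsPrimitiveRoot ρ n) (hz : z ^ n ≠ 1) :
    ∑ k ∈ range n, (1 - z * ρ ^ k)⁻¹ = (n : ℂ) / (1 - z ^ n) := by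
  have hzn : (1 : ℂ) - z ^ n ≠ 0 := sub_ne_zero.2 (Ne.symm hz)
  have hρn : ρ ^ n = 1 := hρ.pow_eq_one
  have key : ∀ k ∈ range n,
      (1 - z * ρ ^ k)⁻¹ = (∑ m ∈ range n, z ^ m * (ρ ^ m) ^ k) / (1 - z ^ n) := by
    intro k _
    have hx : (z * ρ ^ k) ^ n = z ^ n := by
      rw [mul_pow, ← pow_mul, mul_comm k n, pow_mul, hρn, one_pow, mul_one]
    have hx1 : z * ρ ^ k ≠ 1 := by
      intro h
      apply hz; rw [← hx, h, one_pow]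
    have hd : (1 : ℂ) - z * ρ ^ k ≠ 0 := sub_ne_zero.2 (Ne.symm hx1)
    have hg : ∑ m ∈ range n, (z * ρ ^ k) ^ m
        = ((z * ρ ^ k) ^ n - 1) / (z * ρ ^ k - 1) := geom_sum_eq hx1 n
    have hsum : ∑ m ∈ range n, z ^ m * (ρ ^ m) ^ k
        = ∑ m ∈ range n, (z * ρ ^ k) ^ m := by
      refine Finset.sum_congr rfl fun m _ => ?_
      rw [mul_pow, ← pow_mul, ← pow_mul, mul_comm m k]
    rw [hsum, hg, hx]
    have hd' : z * ρ ^ k - 1 ≠ 0 := sub_ne_zero.2 hx1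
    field_simp
    ring
  rw [Finset.sum_congr rfl key, ← Finset.sum_div]
  congr 1
  rw [Finset.sum_comm]
  calc ∑ m ∈ range n, ∑ k ∈ range n, z ^ m * (ρ ^ m) ^ k
      = ∑ m ∈ range n, z ^ m * ∑ k ∈ range n, (ρ ^ m) ^ k := by
        simp [Finset.mul_sum]
    _ = (n : ℂ) := by
        rw [Finset.sum_eq_single 0]
        · simp
        · intro m hm hm0
          have hne : ρ ^ m ≠ 1 :=
            hρ.pow_ne_one_of_pos_of_lt hm0 (Finset.mem_range.1 hm)
          rw [geom_sum_eq hne, ← pow_mul, mul_comm m n, pow_mul, hρn, one_pow,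
            sub_self, zero_div, mul_zero]
        · intro h; exact absurd (Finset.mem_range.2 hn) h

theorem szego_sum_roots_of_unity (n : ℕ) (hn : 1 ≤ n) (z w : ℂ)
    (hz : ‖z‖ < 1) (hw : ‖w‖ < 1)
    (hzw : z * (starRingEnd ℂ) w ≠ 1) (hz1 : z ^ n ≠ 1)
    (hw1 : (starRingEnd ℂ) w ^ n ≠ 1) :
    (1 / (n : ℂ)) * ∑ k ∈ range n,
        (1 - z * Complex.exp (-(((2 * k * π / n : ℝ)) : ℂ) * Complex.I))⁻¹ *
          (starRingEnd ℂ)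
            ((1 - w * Complex.exp (-(((2 * k * π / n : ℝ)) : ℂ) * Complex.I))⁻¹) =
      (1 / ((1 - z ^ n) * (1 - (starRingEnd ℂ) w ^ n))) *
        ((1 - (z * (starRingEnd ℂ) w) ^ n) / (1 - z * (starRingEnd ℂ) w)) := by
  have hn0 : (n : ℂ) ≠ 0 := Nat.cast_ne_zero.2 (by omega)
  set u := (starRingEnd ℂ) w with hu
  set ξ : ℂ := Complex.exp (-(2 * π * Complex.I / n)) with hξ
  have hprim : IsPrimitiveRoot (Complex.exp (2 * π * Complex.I / n)) n :=
    Complex.isPrimitiveRoot_exp n (by omega)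
  have hξprim : IsPrimitiveRoot ξ n := by
    have : ξ = (Complex.exp (2 * π * Complex.I / n))⁻¹ := by
      rw [hξ, ← Complex.exp_neg]
    rw [this]; exact hprim.inv
  have hζprim : IsPrimitiveRoot ξ⁻¹ n := hξprim.inv
  have hξk : ∀ k : ℕ, Complex.exp (-(((2 * k * π / n : ℝ)) : ℂ) * Complex.I) = ξ ^ k := by
    intro k
    rw [hξ, ← Complex.exp_nat_mul]
    congr 1
    push_cast
    ring
  have hξ0 : ξ ≠ 0 := Complex.exp_ne_zero _
  have hcξ : (starRingEnd ℂ) ξ = ξ⁻¹ := by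
    rw [hξ, ← Complex.exp_conj, ← Complex.exp_neg]
    congr 1
    simp [map_ofNat]
    ring
  have hconj : ∀ k : ℕ, (starRingEnd ℂ) (ξ ^ k) = (ξ⁻¹) ^ k := by
    intro k
    rw [map_pow, hcξ]
  -- rewrite each term
  have hzu : (1 : ℂ) - z * u ≠ 0 := sub_ne_zero.2 (Ne.symm hzw)
  have hterm : ∀ k ∈ range n,
      (1 - z * Complex.exp (-(((2 * k * π / n : ℝ)) : ℂ) * Complex.I))⁻¹ *
        (starRingEnd ℂ)
          ((1 - w * Complex.exp (-(((2 * k * π / n : ℝ)) : ℂ) * Complex.I))⁻¹)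
      = (1 - z * u)⁻¹ * ((1 - z * ξ ^ k)⁻¹ + (1 - u * (ξ⁻¹) ^ k)⁻¹ - 1) := by
    intro k _
    rw [hξk k, map_inv₀, map_sub, map_one, map_mul, hconj k]
    have h1 : (1 : ℂ) - z * ξ ^ k ≠ 0 := by
      refine sub_ne_zero.2 (Ne.symm ?_)
      intro h
      apply hz1
      have : (z * ξ ^ k) ^ n = z ^ n := by
        rw [mul_pow, ← pow_mul, mul_comm k n, pow_mul, hξprim.pow_eq_one, one_pow, mul_one]
      rw [← this, h, one_pow]
    have h2 : (1 : ℂ) - u * (ξ⁻¹) ^ k ≠ 0 := by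
      refine sub_ne_zero.2 (Ne.symm ?_)
      intro h
      apply hw1
      have : (u * (ξ⁻¹) ^ k) ^ n = u ^ n := by
        rw [mul_pow, ← pow_mul, mul_comm k n, pow_mul, hζprim.pow_eq_one, one_pow, mul_one]
      rw [hu, ← this, h, one_pow]
    have hξk0 : (ξ : ℂ) ^ k ≠ 0 := pow_ne_zero _ hξ0
    have hrw : (1 : ℂ) - u * (ξ⁻¹) ^ k = (ξ ^ k - u) * (ξ ^ k)⁻¹ := by
      rw [inv_pow]
      field_simp
    have hηu : ξ ^ k - u ≠ 0 := by
      intro h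
      apply h2
      rw [hrw, h, zero_mul]
    rw [hrw]
    field_simp
    ring
  rw [Finset.sum_congr rfl hterm, ← Finset.mul_sum]
  rw [Finset.sum_sub_distrib, Finset.sum_add_distrib,
    sum_inv_one_sub_mul_root n hn ξ z hξprim hz1,
    sum_inv_one_sub_mul_root n hn ξ⁻¹ u hζprim hw1]
  simp only [Finset.sum_const, Finset.card_range, nsmul_eq_mul, mul_one]
  have hzn : (1 : ℂ) - z ^ n ≠ 0 := sub_ne_zero.2 (Ne.symm hz1)
  have hwn : (1 : ℂ) - u ^ n ≠ 0 := sub_ne_zero.2 (Ne.symm hw1)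
  rw [mul_pow]
  field_simp
  ring
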